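/- Let G be a finitely generated amenable group with finite symmetric generating set S, let (Λ_n) be a tempered Følner sequence, and for each p ∈ [0,1)^S let Φ_p ∈ ℬ(ℝ) be the almost-sure limit of the normalized cluster-size distribution functions F_ω(Λ_n)/K_ω(Λ_n) under ℙ_p. Then the function Ψ : [0,1)^S → ℬ(ℝ), p ↦ Φ_p, is continuous (with the ℓ²-metric on [0,1)^S and the supremum norm on ℬ(ℝ)). -/

import Mathlib

open Set Filter MeasureTheory Pointwise

/-- One step of an active path within `Λ`. -/
def percStep {G : Type*} [Group G] (S : Finset G) (ω : G → G → Bool) (Λ : Set G)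
    (a c : G) : Prop :=
  a ∈ Λ ∧ c ∈ Λ ∧ c * a⁻¹ ∈ S ∧ ω a (c * a⁻¹) = true ∧ ω c (a * c⁻¹) = true

/-- The cluster `C_x^Λ(ω)` of `x` in the configuration `ω`. -/
def percCluster {G : Type*} [Group G] (S : Finset G) (ω : G → G → Bool) (Λ : Set G)
    (x : G) : Set G :=
  {y | Relation.ReflTransGen (percStep S ω Λ) x y}

/-- `K_ω(Λ)`: the number of clusters in `Λ`. -/
noncomputable def clusterCount {G : Type*} [Group G] (S : Finset G) (ω : G → G → Bool)
    (Λ : Set G) : ℕ :=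
  Set.ncard {c : Set G | ∃ x ∈ Λ, c = percCluster S ω Λ x}

/-- `F_ω(Λ)(m)`: the number of clusters in `Λ` of size at most `m`. -/
noncomputable def Fdist {G : Type*} [Group G] (S : Finset G) (ω : G → G → Bool)
    (Λ : Set G) (m : ℝ) : ℕ :=
  Set.ncard {c : Set G | (∃ x ∈ Λ, c = percCluster S ω Λ x) ∧ (c.ncard : ℝ) ≤ m}

section Cluster

variable {G : Type*} [Group G] {S : Finset G} {ω ω' : G → G → Bool} {Λ : Set G}

lemma percStep_symm (hsym : ∀ s ∈ S, s⁻¹ ∈ S) : Symmetric (percStep S ω Λ) := by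
  rintro a c ⟨ha, hc, hS, h1, h2⟩
  refine ⟨hc, ha, ?_, h2, h1⟩
  simpa [mul_inv_rev] using hsym _ hS

lemma percCluster_eq_of_rel (hsym : ∀ s ∈ S, s⁻¹ ∈ S) {x y : G}
    (h : Relation.ReflTransGen (percStep S ω Λ) x y) :
    percCluster S ω Λ x = percCluster S ω Λ y := by
  have hs : Symmetric (Relation.ReflTransGen (percStep S ω Λ)) := by
    letI : Std.Symm (percStep S ω Λ) := ⟨fun a b h => percStep_symm (ω := ω) (Λ := Λ) hsym h⟩
    exact fun a b h => Std.Symm.symm (r := Relation.ReflTransGen (percStep S ω Λ)) a b h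
  ext w
  exact ⟨fun hw => Relation.ReflTransGen.trans (hs h) hw, fun hw => h.trans hw⟩

lemma self_mem_percCluster {x : G} : x ∈ percCluster S ω Λ x :=
  Relation.ReflTransGen.refl

lemma percCluster_eq_singleton {x : G} (h0 : ∀ s ∈ S, ω x s = false) :
    percCluster S ω Λ x = {x} := by
  ext w
  constructor
  · intro hw
    rcases (Relation.ReflTransGen.cases_head hw) with h | ⟨c, hstep, _⟩
    · simp [h.symm]
    · obtain ⟨_, _, hS, h1, _⟩ := hstep
      rw [h0 _ hS] at h1
      simp at h1
  · rintro rfl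
    exact Relation.ReflTransGen.refl

lemma clusterSet_eq_image :
    {c : Set G | ∃ x ∈ Λ, c = percCluster S ω Λ x} = percCluster S ω Λ '' Λ := by
  ext c
  simp only [Set.mem_image, Set.mem_setOf_eq]
  constructor
  · rintro ⟨x, hx, rfl⟩; exact ⟨x, hx, rfl⟩
  · rintro ⟨x, hx, rfl⟩; exact ⟨x, hx, rfl⟩

lemma clusterSet_finite (hΛ : Λ.Finite) :
    {c : Set G | ∃ x ∈ Λ, c = percCluster S ω Λ x}.Finite := by
  rw [clusterSet_eq_image]; exact hΛ.image _

lemma one_le_clusterCount (hΛ : Λ.Finite) (hne : Λ.Nonempty) :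
    1 ≤ clusterCount S ω Λ := by
  obtain ⟨x, hx⟩ := hne
  have h : (percCluster S ω Λ x) ∈ {c : Set G | ∃ x ∈ Λ, c = percCluster S ω Λ x} :=
    ⟨x, hx, rfl⟩
  have := (Set.ncard_pos (clusterSet_finite hΛ)).2 ⟨_, h⟩
  exact this

lemma Fdist_le_clusterCount (hΛ : Λ.Finite) (m : ℝ) :
    Fdist S ω Λ m ≤ clusterCount S ω Λ := by
  apply Set.ncard_le_ncard _ (clusterSet_finite hΛ)
  intro c hc; exact hc.1

lemma le_clusterCount (hΛ : Λ.Finite) (x₀ : G) (hx₀ : x₀ ∈ Λ) (T : Finset G)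
    (hT : ∀ y ∈ T, y ∈ Λ ∧ y ≠ x₀ ∧ ∀ s ∈ S, ω y s = false) :
    T.card + 1 ≤ clusterCount S ω Λ := by
  classical
  set f : G → Set G := percCluster S ω Λ with hf
  have hx₀T : x₀ ∉ T := fun h => (hT _ h).2.1 rfl
  have hsing : ∀ y ∈ T, f y = {y} := fun y hy => percCluster_eq_singleton (hT y hy).2.2
  have hinj : Set.InjOn f ↑(insert x₀ T) := by
    intro a ha b hb hab
    simp only [Finset.coe_insert, Set.mem_insert_iff, Finset.mem_coe] at ha hb
    rcases ha with rfl | ha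
    · rcases hb with rfl | hb
      · rfl
      · exfalso
        have : a ∈ f b := hab ▸ self_mem_percCluster
        rw [hsing b hb] at this
        exact (hT b hb).2.1 (by simpa using this.symm)
    · rcases hb with rfl | hb
      · exfalso
        have : b ∈ f a := hab ▸ self_mem_percCluster
        rw [hsing a ha] at this
        exact (hT a ha).2.1 (by simpa using this.symm)
      · have := (hsing a ha) ▸ (hsing b hb) ▸ hab
        simpa using this
  have hcard : ((insert x₀ T).image f).card = T.card + 1 := by
    rw [Finset.card_image_of_injOn hinj, Finset.card_insert_of_notMem hx₀T]
  have hsub : (((insert x₀ T).image f : Finset (Set G)) : Set (Set G)) ⊆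
      {c : Set G | ∃ x ∈ Λ, c = percCluster S ω Λ x} := by
    intro c hc
    simp only [Finset.coe_image, Set.mem_image, Finset.coe_insert] at hc
    obtain ⟨y, hy, rfl⟩ := hc
    rcases hy with rfl | hy
    · exact ⟨y, hx₀, rfl⟩
    · exact ⟨y, (hT y hy).1, rfl⟩
  calc T.card + 1 = (((insert x₀ T).image f : Finset (Set G)) : Set (Set G)).ncard := by
        rw [Set.ncard_coe_finset, hcard]
    _ ≤ _ := Set.ncard_le_ncard hsub (clusterSet_finite hΛ)

omit [Group G] in
lemma rtg_toggle {R R' : G → G → Prop} {u z : G} (hsymR : Symmetric R)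
    (hsub : ∀ a c, R' a c → R a c ∨ (a = u ∧ c = z) ∨ (a = z ∧ c = u))
    {x y : G} (h : Relation.ReflTransGen R' x y) :
    Relation.ReflTransGen R x y ∨
      (Relation.ReflTransGen R x u ∧ Relation.ReflTransGen R z y) ∨
      (Relation.ReflTransGen R x z ∧ Relation.ReflTransGen R u y) := by
  have hsymRT : Symmetric (Relation.ReflTransGen R) := by
    letI : Std.Symm R := ⟨fun a b h => hsymR h⟩
    exact fun a b h => Std.Symm.symm (r := Relation.ReflTransGen R) a b h
  induction h with
  | refl => exact Or.inl .refl
  | tail hb hstep ih =>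
    rcases hsub _ _ hstep with hR | ⟨rfl, rfl⟩ | ⟨rfl, rfl⟩
    · rcases ih with h1 | ⟨h1, h2⟩ | ⟨h1, h2⟩
      · exact Or.inl (h1.tail hR)
      · exact Or.inr (Or.inl ⟨h1, h2.tail hR⟩)
      · exact Or.inr (Or.inr ⟨h1, h2.tail hR⟩)
    · rcases ih with h1 | ⟨h1, h2⟩ | ⟨h1, h2⟩
      · exact Or.inr (Or.inl ⟨h1, .refl⟩)
      · exact Or.inl (h1.trans (hsymRT h2))
      · exact Or.inl h1
    · rcases ih with h1 | ⟨h1, h2⟩ | ⟨h1, h2⟩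
      · exact Or.inr (Or.inr ⟨h1, .refl⟩)
      · exact Or.inl h1
      · exact Or.inl (h1.trans (hsymRT h2))
lemma counts_toggle (hsym : ∀ s ∈ S, s⁻¹ ∈ S) (hΛ : Λ.Finite)
    {x₀ s₀ : G} (hdiff : ∀ x s, ¬(x = x₀ ∧ s = s₀) → ω x s = ω' x s)
    (h0 : ω x₀ s₀ = false) :
    (clusterCount S ω' Λ ≤ clusterCount S ω Λ ∧
      clusterCount S ω Λ ≤ clusterCount S ω' Λ + 1) ∧
    ∀ m : ℝ, Fdist S ω' Λ m ≤ Fdist S ω Λ m + 1 ∧ Fdist S ω Λ m ≤ Fdist S ω' Λ m + 2 := by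
  classical
  set R : G → G → Prop := percStep S ω Λ with hR
  set R' : G → G → Prop := percStep S ω' Λ with hR'
  set z : G := s₀ * x₀ with hz
  have hRsub : ∀ a c, R a c → R' a c := by
    rintro a c ⟨ha, hc, hS, h1, h2⟩
    refine ⟨ha, hc, hS, ?_, ?_⟩
    · by_cases hA : a = x₀ ∧ c * a⁻¹ = s₀
      · rw [hA.2, hA.1, h0] at h1; simp at h1
      · rw [← hdiff _ _ hA]; exact h1
    · by_cases hB : c = x₀ ∧ a * c⁻¹ = s₀
      · rw [hB.2, hB.1, h0] at h2; simp at h2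
      · rw [← hdiff _ _ hB]; exact h2
  have hR'sub : ∀ a c, R' a c → R a c ∨ (a = x₀ ∧ c = z) ∨ (a = z ∧ c = x₀) := by
    rintro a c ⟨ha, hc, hS, h1, h2⟩
    by_cases hA : a = x₀ ∧ c * a⁻¹ = s₀
    · refine Or.inr (Or.inl ⟨hA.1, ?_⟩)
      have : c * a⁻¹ * a = s₀ * x₀ := by rw [hA.2, hA.1]
      simpa [mul_assoc] using this
    · by_cases hB : c = x₀ ∧ a * c⁻¹ = s₀
      · refine Or.inr (Or.inr ⟨?_, hB.1⟩)
        have : a * c⁻¹ * c = s₀ * x₀ := by rw [hB.2, hB.1]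
        simpa [mul_assoc] using this
      · exact Or.inl ⟨ha, hc, hS, by rw [hdiff _ _ hA]; exact h1,
          by rw [hdiff _ _ hB]; exact h2⟩
  have hsymR : Symmetric R := percStep_symm hsym
  have hsymR' : Symmetric R' := percStep_symm hsym
  have hsymRT : Symmetric (Relation.ReflTransGen R) := by
    letI : Std.Symm R := ⟨fun a b h => hsymR h⟩
    exact fun a b h => Std.Symm.symm (r := Relation.ReflTransGen R) a b h
  have hmono : ∀ {x y : G}, Relation.ReflTransGen R x y → Relation.ReflTransGen R' x y :=
    fun h => Relation.ReflTransGen.mono (fun a c => hRsub a c) _ _ h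
  have heqcase : (∀ x, percCluster S ω' Λ x = percCluster S ω Λ x) →
      (clusterCount S ω' Λ ≤ clusterCount S ω Λ ∧
        clusterCount S ω Λ ≤ clusterCount S ω' Λ + 1) ∧
      ∀ m : ℝ, Fdist S ω' Λ m ≤ Fdist S ω Λ m + 1 ∧
        Fdist S ω Λ m ≤ Fdist S ω' Λ m + 2 := by
    intro hcl
    have h1 : clusterCount S ω' Λ = clusterCount S ω Λ := by
      unfold clusterCount
      congr 1
      ext c
      simp only [Set.mem_setOf_eq]
      exact ⟨fun ⟨x, hx, h⟩ => ⟨x, hx, h.trans (hcl x)⟩,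
        fun ⟨x, hx, h⟩ => ⟨x, hx, h.trans (hcl x).symm⟩⟩
    have h2 : ∀ m : ℝ, Fdist S ω' Λ m = Fdist S ω Λ m := by
      intro m
      unfold Fdist
      congr 1
      ext c
      simp only [Set.mem_setOf_eq]
      constructor
      · rintro ⟨⟨x, hx, h⟩, hm⟩; exact ⟨⟨x, hx, h.trans (hcl x)⟩, hm⟩
      · rintro ⟨⟨x, hx, h⟩, hm⟩; exact ⟨⟨x, hx, h.trans (hcl x).symm⟩, hm⟩
    exact ⟨⟨h1.le, by rw [h1]; exact Nat.le_succ _⟩, fun m => by rw [h2 m]; omega⟩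
  by_cases hstep : R' x₀ z
  · have hx₀Λ : x₀ ∈ Λ := hstep.1
    have hzΛ : z ∈ Λ := hstep.2.1
    by_cases hxz : Relation.ReflTransGen R x₀ z
    · apply heqcase
      intro x
      ext w
      constructor
      · intro hw
        rcases rtg_toggle hsymR hR'sub hw with h | ⟨h1, h2⟩ | ⟨h1, h2⟩
        · exact h
        · exact (h1.trans hxz).trans h2
        · exact (h1.trans (hsymRT hxz)).trans h2
      · exact fun hw => hmono hw
    · -- merge case
      set Ca : Set G := percCluster S ω Λ x₀ with hCa
      set Cb : Set G := percCluster S ω Λ z with hCb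
      set u : Set G := Ca ∪ Cb with hu
      have hclaimA : ∀ y, (Relation.ReflTransGen R y x₀ ∨ Relation.ReflTransGen R y z) →
          percCluster S ω' Λ y = u := by
        intro y hy
        ext w
        constructor
        · intro hw
          rcases rtg_toggle hsymR hR'sub hw with h | ⟨h1, h2⟩ | ⟨h1, h2⟩
          · rcases hy with hy | hy
            · exact Or.inl ((hsymRT hy).trans h)
            · exact Or.inr ((hsymRT hy).trans h)
          · exact Or.inr h2
          · exact Or.inl h2
        · rintro (hw | hw)
          · rcases hy with hy | hy
            · exact (hmono hy).trans (hmono hw)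
            · exact ((hmono hy).trans
                (Relation.ReflTransGen.single (hsymR' hstep))).trans (hmono hw)
          · rcases hy with hy | hy
            · exact ((hmono hy).trans (Relation.ReflTransGen.single hstep)).trans (hmono hw)
            · exact (hmono hy).trans (hmono hw)
      have hclaimB : ∀ y, ¬Relation.ReflTransGen R y x₀ → ¬Relation.ReflTransGen R y z →
          percCluster S ω' Λ y = percCluster S ω Λ y := by
        intro y hyx hyz
        ext w
        constructor
        · intro hw
          rcases rtg_toggle hsymR hR'sub hw with h | ⟨h1, h2⟩ | ⟨h1, h2⟩
          · exact h
          · exact absurd h1 hyx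
          · exact absurd h1 hyz
        · exact fun hw => hmono hw
      have hx₀Ca : x₀ ∈ Ca := self_mem_percCluster
      have hzCb : z ∈ Cb := self_mem_percCluster
      have hzCa : z ∉ Ca := hxz
      have hx₀Cb : x₀ ∉ Cb := fun h => hxz (hsymRT h)
      have hab : Ca ≠ Cb := fun h => hzCa (h ▸ hzCb)
      have hCaCS : Ca ∈ {c : Set G | ∃ x ∈ Λ, c = percCluster S ω Λ x} := ⟨x₀, hx₀Λ, rfl⟩
      have hCbCS : Cb ∈ {c : Set G | ∃ x ∈ Λ, c = percCluster S ω Λ x} := ⟨z, hzΛ, rfl⟩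
      have huCS : u ∉ {c : Set G | ∃ x ∈ Λ, c = percCluster S ω Λ x} := by
        rintro ⟨y, hy, hEq⟩
        have hyx₀ : Relation.ReflTransGen R y x₀ := by
          have : x₀ ∈ percCluster S ω Λ y := hEq ▸ Or.inl hx₀Ca
          exact this
        have hEq2 : percCluster S ω Λ y = Ca := percCluster_eq_of_rel hsym hyx₀
        rw [hEq2] at hEq
        exact hzCa (hEq ▸ Or.inr hzCb)
      have hCS' : {c : Set G | ∃ x ∈ Λ, c = percCluster S ω' Λ x} =
          insert u ({c : Set G | ∃ x ∈ Λ, c = percCluster S ω Λ x} \ {Ca, Cb}) := by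
        ext c
        simp only [Set.mem_insert_iff, Set.mem_diff, Set.mem_setOf_eq,
          Set.mem_singleton_iff]
        constructor
        · rintro ⟨y, hy, rfl⟩
          by_cases hcon : Relation.ReflTransGen R y x₀ ∨ Relation.ReflTransGen R y z
          · exact Or.inl (hclaimA y hcon)
          · push_neg at hcon
            rw [hclaimB y hcon.1 hcon.2]
            refine Or.inr ⟨⟨y, hy, rfl⟩, ?_⟩
            rintro (h | h)
            · exact hcon.1 (show x₀ ∈ percCluster S ω Λ y from h ▸ hx₀Ca)
            · exact hcon.2 (show z ∈ percCluster S ω Λ y from h ▸ hzCb)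
        · rintro (rfl | ⟨⟨y, hy, rfl⟩, hdm⟩)
          · exact ⟨x₀, hx₀Λ, (hclaimA x₀ (Or.inl Relation.ReflTransGen.refl)).symm⟩
          · push_neg at hdm
            have hyx : ¬Relation.ReflTransGen R y x₀ :=
              fun h => hdm.1 (percCluster_eq_of_rel hsym h)
            have hyz : ¬Relation.ReflTransGen R y z :=
              fun h => hdm.2 (percCluster_eq_of_rel hsym h)
            exact ⟨y, hy, (hclaimB y hyx hyz).symm⟩
      -- counting
      have hfin : {c : Set G | ∃ x ∈ Λ, c = percCluster S ω Λ x}.Finite :=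
        clusterSet_finite hΛ
      have hfin2 : ({c : Set G | ∃ x ∈ Λ, c = percCluster S ω Λ x} \ {Ca, Cb}).Finite :=
        hfin.diff
      have hfin' : {c : Set G | ∃ x ∈ Λ, c = percCluster S ω' Λ x}.Finite :=
        clusterSet_finite hΛ
      have hpair : ({Ca, Cb} : Set (Set G)) ⊆ {c | ∃ x ∈ Λ, c = percCluster S ω Λ x} := by
        rintro c (rfl | hc)
        · exact hCaCS
        · rw [Set.mem_singleton_iff] at hc; exact hc ▸ hCbCS
      have h2K : 2 ≤ clusterCount S ω Λ := by
        have hle := Set.ncard_le_ncard hpair hfin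
        rw [Set.ncard_pair hab] at hle
        exact hle
      have hu_not : u ∉ {c : Set G | ∃ x ∈ Λ, c = percCluster S ω Λ x} \ {Ca, Cb} :=
        fun h => huCS h.1
      have e1 : clusterCount S ω' Λ =
          ({c : Set G | ∃ x ∈ Λ, c = percCluster S ω Λ x} \ {Ca, Cb}).ncard + 1 := by
        show Set.ncard _ = _
        rw [hCS']
        exact Set.ncard_insert_of_notMem hu_not hfin2
      have e2 : ({c : Set G | ∃ x ∈ Λ, c = percCluster S ω Λ x} \ {Ca, Cb}).ncard =
          clusterCount S ω Λ - 2 := by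
        have := Set.ncard_diff hpair (Set.toFinite _)
        rw [Set.ncard_pair hab] at this
        exact this
      refine ⟨⟨by omega, by omega⟩, ?_⟩
      intro m
      constructor
      · -- F' ≤ F + 1
        have hsubF : {c : Set G | (∃ x ∈ Λ, c = percCluster S ω' Λ x) ∧ (c.ncard : ℝ) ≤ m} ⊆
            insert u {c : Set G | (∃ x ∈ Λ, c = percCluster S ω Λ x) ∧ (c.ncard : ℝ) ≤ m} := by
          rintro c ⟨hcCS, hm⟩
          have hmem : c ∈ insert u ({c : Set G | ∃ x ∈ Λ, c = percCluster S ω Λ x} \ {Ca, Cb}) :=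
            hCS' ▸ hcCS
          rcases Set.mem_insert_iff.1 hmem with rfl | hmem2
          · exact Set.mem_insert _ _
          · exact Set.mem_insert_of_mem _ ⟨hmem2.1, hm⟩
        have hfinF : {c : Set G | (∃ x ∈ Λ, c = percCluster S ω Λ x) ∧ (c.ncard : ℝ) ≤ m}.Finite :=
          hfin.subset (fun c hc => hc.1)
        calc Fdist S ω' Λ m
            ≤ (insert u {c : Set G | (∃ x ∈ Λ, c = percCluster S ω Λ x) ∧ (c.ncard : ℝ) ≤ m}).ncard :=
              Set.ncard_le_ncard hsubF (hfinF.insert u)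
          _ ≤ Fdist S ω Λ m + 1 := Set.ncard_insert_le _ _
      · -- F ≤ F' + 2
        have hsubF : {c : Set G | (∃ x ∈ Λ, c = percCluster S ω Λ x) ∧ (c.ncard : ℝ) ≤ m} ⊆
            insert Ca (insert Cb
              {c : Set G | (∃ x ∈ Λ, c = percCluster S ω' Λ x) ∧ (c.ncard : ℝ) ≤ m}) := by
          rintro c ⟨hcCS, hm⟩
          by_cases hca : c = Ca
          · exact hca ▸ Set.mem_insert _ _
          · by_cases hcb : c = Cb
            · exact Set.mem_insert_of_mem _ (hcb ▸ Set.mem_insert _ _)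
            · refine Set.mem_insert_of_mem _ (Set.mem_insert_of_mem _ ⟨?_, hm⟩)
              have hnot : c ∉ ({Ca, Cb} : Set (Set G)) := by
                rintro (h | h)
                · exact hca h
                · rw [Set.mem_singleton_iff] at h; exact hcb h
              have hmem2 : c ∈ insert u
                  ({c : Set G | ∃ x ∈ Λ, c = percCluster S ω Λ x} \ {Ca, Cb}) :=
                Set.mem_insert_of_mem _ ⟨hcCS, hnot⟩
              rw [← hCS'] at hmem2
              exact hmem2
        have hfinF' : {c : Set G | (∃ x ∈ Λ, c = percCluster S ω' Λ x) ∧ (c.ncard : ℝ) ≤ m}.Finite :=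
          hfin'.subset (fun c hc => hc.1)
        calc Fdist S ω Λ m
            ≤ (insert Ca (insert Cb
                {c : Set G | (∃ x ∈ Λ, c = percCluster S ω' Λ x) ∧ (c.ncard : ℝ) ≤ m})).ncard :=
              Set.ncard_le_ncard hsubF ((hfinF'.insert Cb).insert Ca)
          _ ≤ (insert Cb
                {c : Set G | (∃ x ∈ Λ, c = percCluster S ω' Λ x) ∧ (c.ncard : ℝ) ≤ m}).ncard + 1 :=
              Set.ncard_insert_le _ _
          _ ≤ Fdist S ω' Λ m + 2 := by
              have h := Set.ncard_insert_le Cb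
                {c : Set G | (∃ x ∈ Λ, c = percCluster S ω' Λ x) ∧ (c.ncard : ℝ) ≤ m}
              have hh : Fdist S ω' Λ m =
                  {c : Set G | (∃ x ∈ Λ, c = percCluster S ω' Λ x) ∧ (c.ncard : ℝ) ≤ m}.ncard := rfl
              omega
  · apply heqcase
    intro x
    have hRR' : ∀ a c, R' a c ↔ R a c := by
      intro a c
      refine ⟨fun h => ?_, hRsub a c⟩
      rcases hR'sub _ _ h with h' | ⟨rfl, rfl⟩ | ⟨rfl, rfl⟩
      · exact h'
      · exact absurd h hstep
      · exact absurd (hsymR' h) hstep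
    ext w
    constructor
    · intro hw
      exact Relation.ReflTransGen.mono (fun a c h => (hRR' a c).1 h) _ _ hw
    · intro hw
      exact Relation.ReflTransGen.mono (fun a c h => (hRR' a c).2 h) _ _ hw

end Cluster
section Prob

variable {ι α : Type*} [Fintype ι] [DecidableEq ι] [DecidableEq α] [Fintype α]

/-- Expectation of `f` under the product measure with marginals `w j`. -/
noncomputable def pExp (w : ι → Bool → ℝ) (f : (ι → Bool) → ℝ) : ℝ :=
  ∑ v : ι → Bool, (∏ j, w j (v j)) * f v

variable {w : ι → Bool → ℝ} {f g : (ι → Bool) → ℝ}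

lemma pExp_mono (hw : ∀ j b, 0 ≤ w j b) (h : ∀ v, f v ≤ g v) : pExp w f ≤ pExp w g :=
  Finset.sum_le_sum fun v _ =>
    mul_le_mul_of_nonneg_left (h v) (Finset.prod_nonneg fun j _ => hw j (v j))

lemma pExp_add : pExp w (fun v => f v + g v) = pExp w f + pExp w g := by
  unfold pExp; rw [← Finset.sum_add_distrib]; congr 1; ext v; ring

lemma pExp_const_mul (c : ℝ) : pExp w (fun v => c * f v) = c * pExp w f := by
  unfold pExp; rw [Finset.mul_sum]; congr 1; ext v; ring

lemma pExp_sum {β : Type*} (B : Finset β) (h : β → (ι → Bool) → ℝ) :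
    pExp w (fun v => ∑ y ∈ B, h y v) = ∑ y ∈ B, pExp w (h y) := by
  unfold pExp
  simp_rw [Finset.mul_sum]
  rw [Finset.sum_comm]

lemma pExp_boole (hw1 : ∀ j, w j true + w j false = 1) (D : Finset ι) :
    pExp w (fun v => ∏ j ∈ D, (if v j = false then (1 : ℝ) else 0)) =
      ∏ j ∈ D, w j false := by
  unfold pExp
  have key : ∀ v : ι → Bool,
      (∏ j, w j (v j)) * (∏ j ∈ D, (if v j = false then (1 : ℝ) else 0)) =
      ∏ j, (w j (v j) * if j ∈ D then (if v j = false then (1 : ℝ) else 0) else 1) := by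
    intro v
    rw [Finset.prod_mul_distrib]
    congr 1
    exact (Fintype.prod_ite_mem D (fun j => if v j = false then (1 : ℝ) else 0)).symm
  simp_rw [key]
  have hps := Fintype.prod_sum
    (fun j (b : Bool) => w j b * if j ∈ D then (if b = false then (1 : ℝ) else 0) else 1)
  rw [← hps]
  have key2 : ∀ j, (∑ b : Bool, w j b * if j ∈ D then (if b = false then (1 : ℝ) else 0) else 1)
      = if j ∈ D then w j false else 1 := by
    intro j
    rw [Fintype.sum_bool]
    by_cases hj : j ∈ D <;> simp [hj, hw1 j]
  simp_rw [key2]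
  exact Fintype.prod_ite_mem D (fun j => w j false)

lemma pExp_one (hw1 : ∀ j, w j true + w j false = 1) : pExp w (fun _ => 1) = 1 := by
  have h := pExp_boole (w := w) hw1 ∅
  simp only [Finset.prod_empty] at h
  exact h

/-- indicator of the event that all coordinates of row `y` are `false` -/
noncomputable def rowInd (r : ι → α) (y : α) (v : ι → Bool) : ℝ :=
  ∏ j ∈ Finset.univ.filter (fun j => r j = y), (if v j = false then (1 : ℝ) else 0)

lemma rowInd_eq_ite (r : ι → α) (y : α) (v : ι → Bool) :
    rowInd r y v = if (∀ j, r j = y → v j = false) then 1 else 0 := by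
  unfold rowInd
  rw [Finset.prod_boole]
  congr 1
  simp only [Finset.mem_filter, Finset.mem_univ, true_and, eq_iff_iff]

lemma rowInd_nonneg (r : ι → α) (y : α) (v : ι → Bool) : 0 ≤ rowInd r y v := by
  rw [rowInd_eq_ite]; split_ifs <;> norm_num

lemma rowInd_le_one (r : ι → α) (y : α) (v : ι → Bool) : rowInd r y v ≤ 1 := by
  rw [rowInd_eq_ite]; split_ifs <;> norm_num

lemma rowInd_mul_self (r : ι → α) (y : α) (v : ι → Bool) :
    rowInd r y v * rowInd r y v = rowInd r y v := by
  rw [rowInd_eq_ite]; split_ifs <;> norm_num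

/-- number of all-`false` rows among `A` -/
noncomputable def zCnt (r : ι → α) (A : Finset α) (v : ι → Bool) : ℝ :=
  ∑ y ∈ A, rowInd r y v

lemma zCnt_nonneg (r : ι → α) (A : Finset α) (v : ι → Bool) : 0 ≤ zCnt r A v :=
  Finset.sum_nonneg fun y _ => rowInd_nonneg r y v

lemma pExp_rowInd (hw1 : ∀ j, w j true + w j false = 1) (r : ι → α) (y : α) :
    pExp w (rowInd r y) = ∏ j ∈ Finset.univ.filter (fun j => r j = y), w j false := by
  exact pExp_boole hw1 _

lemma pExp_rowInd_mul (hw1 : ∀ j, w j true + w j false = 1) (r : ι → α) {y y' : α}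
    (hne : y ≠ y') :
    pExp w (fun v => rowInd r y v * rowInd r y' v) =
      (∏ j ∈ Finset.univ.filter (fun j => r j = y), w j false) *
      (∏ j ∈ Finset.univ.filter (fun j => r j = y'), w j false) := by
  have hdisj : Disjoint (Finset.univ.filter (fun j => r j = y))
      (Finset.univ.filter (fun j => r j = y')) := by
    rw [Finset.disjoint_left]
    intro j hj hj'
    simp only [Finset.mem_filter, Finset.mem_univ, true_and] at hj hj'
    exact hne (hj ▸ hj' ▸ rfl)
  have key : ∀ v : ι → Bool, rowInd r y v * rowInd r y' v =
      ∏ j ∈ (Finset.univ.filter (fun j => r j = y)) ∪ (Finset.univ.filter (fun j => r j = y')),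
        (if v j = false then (1 : ℝ) else 0) := by
    intro v
    rw [Finset.prod_union hdisj]
    rfl
  simp_rw [key]
  rw [pExp_boole hw1, Finset.prod_union hdisj]

/-- Chebyshev-type bound: probability that fewer than `μ/2` rows are all-false. -/
lemma pExp_cheb (hw0 : ∀ j b, 0 ≤ w j b) (hw1 : ∀ j, w j true + w j false = 1)
    (r : ι → α) (A : Finset α)
    (μ : ℝ) (hμ : μ = ∑ y ∈ A, ∏ j ∈ Finset.univ.filter (fun j => r j = y), w j false)
    (hμpos : 0 < μ) (t : ℝ) (ht : t ≤ μ / 2) :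
    pExp w (fun v => if zCnt r A v < t then (1 : ℝ) else 0) ≤ 4 / μ := by
  set π : α → ℝ := fun y => ∏ j ∈ Finset.univ.filter (fun j => r j = y), w j false with hπ
  have hπ0 : ∀ y, 0 ≤ π y := fun y => Finset.prod_nonneg fun j _ => hw0 j false
  -- second moment of Z
  have hZ2 : pExp w (fun v => zCnt r A v * zCnt r A v) ≤ μ + μ * μ := by
    have expand : ∀ v, zCnt r A v * zCnt r A v =
        ∑ y ∈ A, ∑ y' ∈ A, rowInd r y v * rowInd r y' v := by
      intro v
      rw [zCnt, Finset.sum_mul_sum]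
    simp_rw [expand]
    rw [pExp_sum]
    have inner : ∀ y ∈ A, pExp w (fun v => ∑ y' ∈ A, rowInd r y v * rowInd r y' v)
        ≤ π y + π y * μ := by
      intro y _
      rw [pExp_sum]
      have step : ∀ y' ∈ A, pExp w (fun v => rowInd r y v * rowInd r y' v) ≤
          (if y' = y then π y else π y * π y') := by
        intro y' _
        by_cases h : y' = y
        · subst h
          rw [if_pos rfl]
          have hfe : (fun v => rowInd r y' v * rowInd r y' v) = rowInd r y' := by
            ext v; exact rowInd_mul_self r y' v
          rw [hfe, pExp_rowInd hw1]
        · rw [if_neg h, pExp_rowInd_mul hw1 r (fun hh => h hh.symm)]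
      calc ∑ y' ∈ A, pExp w (fun v => rowInd r y v * rowInd r y' v)
          ≤ ∑ y' ∈ A, (if y' = y then π y else π y * π y') := Finset.sum_le_sum step
        _ ≤ ∑ y' ∈ A, (if y' = y then π y else 0) + ∑ y' ∈ A, π y * π y' := by
            rw [← Finset.sum_add_distrib]
            apply Finset.sum_le_sum
            intro y' _
            split_ifs
            · have := mul_nonneg (hπ0 y) (hπ0 y'); linarith
            · simp
        _ ≤ π y + π y * μ := by
            apply add_le_add
            · rw [Finset.sum_ite_eq' A y (fun _ => π y)]
              split_ifs <;> simp [hπ0 y]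
            · rw [← Finset.mul_sum, hμ]
    calc ∑ y ∈ A, pExp w (fun v => ∑ y' ∈ A, rowInd r y v * rowInd r y' v)
        ≤ ∑ y ∈ A, (π y + π y * μ) := Finset.sum_le_sum inner
      _ = μ + μ * μ := by
          rw [Finset.sum_add_distrib, ← Finset.sum_mul, hμ]
  -- expectation of Z
  have hEZ : pExp w (zCnt r A) = μ := by
    have : zCnt r A = fun v => ∑ y ∈ A, rowInd r y v := rfl
    rw [this, pExp_sum, hμ]
    exact Finset.sum_congr rfl fun y _ => pExp_rowInd hw1 r y
  -- variance bound
  have hvar : pExp w (fun v => (zCnt r A v - μ) ^ 2) ≤ μ := by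
    have expand2 : ∀ v : ι → Bool, (zCnt r A v - μ) ^ 2 =
        zCnt r A v * zCnt r A v + ((-(2 * μ)) * zCnt r A v + (μ ^ 2) * 1) := by
      intro v; ring
    simp_rw [expand2]
    rw [pExp_add, pExp_add, pExp_const_mul, pExp_const_mul, hEZ, pExp_one hw1]
    nlinarith [hZ2]
  -- Chebyshev
  have hpt : ∀ v : ι → Bool,
      (μ / 2) ^ 2 * (if zCnt r A v < t then (1 : ℝ) else 0) ≤ (zCnt r A v - μ) ^ 2 := by
    intro v
    by_cases h : zCnt r A v < t
    · rw [if_pos h]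
      have h0 := zCnt_nonneg r A v
      nlinarith
    · rw [if_neg h]
      have := sq_nonneg (zCnt r A v - μ)
      linarith
  have h4 : (μ / 2) ^ 2 * pExp w (fun v => if zCnt r A v < t then (1 : ℝ) else 0) ≤ μ := by
    rw [← pExp_const_mul]
    exact le_trans (pExp_mono hw0 hpt) hvar
  have hsq : (0 : ℝ) < (μ / 2) ^ 2 := by positivity
  rw [show (4 : ℝ) / μ = μ / ((μ / 2) ^ 2) by field_simp; ring]
  rw [le_div_iff₀ hsq]
  linarith [h4]

end Prob
section Step

variable {ι : Type*} [Fintype ι] [DecidableEq ι]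

/-- the weight family forcing coordinate `j₀` to be `true` -/
noncomputable def wplus (j₀ : ι) (w : ι → Bool → ℝ) : ι → Bool → ℝ :=
  fun j b => if j = j₀ then (if b = true then 1 else 0) else w j b

lemma wplus_nonneg {j₀ : ι} {w : ι → Bool → ℝ} (hw0 : ∀ j b, 0 ≤ w j b) :
    ∀ j b, 0 ≤ wplus j₀ w j b := by
  intro j b
  unfold wplus
  split_ifs
  · norm_num
  · norm_num
  · exact hw0 j b

lemma wplus_sum_one {j₀ : ι} {w : ι → Bool → ℝ} (hw1 : ∀ j, w j true + w j false = 1) :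
    ∀ j, wplus j₀ w j true + wplus j₀ w j false = 1 := by
  intro j
  unfold wplus
  split_ifs <;> simp_all

lemma pair_sum (j₀ : ι) (F : (ι → Bool) → ℝ) :
    ∑ v : ι → Bool, F v =
      ∑ v : ι → Bool, (if v j₀ = true then F v + F (Function.update v j₀ false) else 0) := by
  classical
  have hsplit := Finset.sum_filter_add_sum_filter_not Finset.univ
    (fun v : ι → Bool => v j₀ = true) F
  have hswap : ∑ v ∈ Finset.univ.filter (fun v : ι → Bool => ¬ v j₀ = true), F v =
      ∑ v ∈ Finset.univ.filter (fun v : ι → Bool => v j₀ = true),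
        F (Function.update v j₀ false) := by
    apply Finset.sum_nbij' (fun v => Function.update v j₀ true)
      (fun v => Function.update v j₀ false)
    · intro v hv
      simp [Finset.mem_filter]
    · intro v hv
      simp [Finset.mem_filter]
    · intro v hv
      simp only [Finset.mem_filter, Finset.mem_univ, true_and, Bool.not_eq_true] at hv
      rw [Function.update_idem]
      rw [← hv]
      exact Function.update_eq_self _ _
    · intro v hv
      simp only [Finset.mem_filter, Finset.mem_univ, true_and] at hv
      rw [Function.update_idem, ← hv]
      exact Function.update_eq_self _ _
    · intro v hv
      simp only [Finset.mem_filter, Finset.mem_univ, true_and, Bool.not_eq_true] at hv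
      rw [Function.update_idem, ← hv]
      rw [Function.update_eq_self]
  have hrhs : ∑ v : ι → Bool, (if v j₀ = true then F v + F (Function.update v j₀ false) else 0)
      = ∑ v ∈ Finset.univ.filter (fun v : ι → Bool => v j₀ = true),
          (F v + F (Function.update v j₀ false)) := by
    rw [Finset.sum_filter]
  rw [hrhs, Finset.sum_add_distrib, ← hsplit, hswap]

lemma prod_update_erase {w : ι → Bool → ℝ} (j₀ : ι) (v : ι → Bool) (b : Bool) :
    ∏ j ∈ Finset.univ.erase j₀, w j (Function.update v j₀ b j) =
      ∏ j ∈ Finset.univ.erase j₀, w j (v j) := by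
  apply Finset.prod_congr rfl
  intro j hj
  rw [Function.update_of_ne (Finset.ne_of_mem_erase hj)]

lemma pExp_step (j₀ : ι) (w w' : ι → Bool → ℝ)
    (hagree : ∀ j, j ≠ j₀ → w j = w' j)
    (hw0 : ∀ j b, 0 ≤ w j b)
    (hw1 : ∀ j, w j true + w j false = 1) (hw'1 : ∀ j, w' j true + w' j false = 1)
    (g bnd : (ι → Bool) → ℝ)
    (hg : ∀ v, v j₀ = true → |g v - g (Function.update v j₀ false)| ≤ bnd v) :
    |pExp w g - pExp w' g| ≤ |w j₀ true - w' j₀ true| * pExp (wplus j₀ w) bnd := by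
  classical
  set d : ℝ := w j₀ true - w' j₀ true with hd
  have hdf : w j₀ false - w' j₀ false = -d := by
    have h1 := hw1 j₀
    have h2 := hw'1 j₀
    rw [hd]; linarith
  set Rest : (ι → Bool) → ℝ := fun v => ∏ j ∈ Finset.univ.erase j₀, w j (v j) with hRest
  have hRest0 : ∀ v, 0 ≤ Rest v := fun v => Finset.prod_nonneg fun j _ => hw0 j (v j)
  have hRestUp : ∀ v b, Rest (Function.update v j₀ b) = Rest v := by
    intro v b
    rw [hRest]
    exact prod_update_erase j₀ v b
  have hdecomp : ∀ v : ι → Bool, (∏ j, w j (v j)) = w j₀ (v j₀) * Rest v := by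
    intro v
    rw [hRest]
    exact (Finset.mul_prod_erase Finset.univ (fun j => w j (v j))
      (Finset.mem_univ j₀)).symm
  have hdecomp' : ∀ v : ι → Bool, (∏ j, w' j (v j)) = w' j₀ (v j₀) * Rest v := by
    intro v
    have heq : Rest v = ∏ j ∈ Finset.univ.erase j₀, w' j (v j) :=
      Finset.prod_congr rfl fun j hj => by rw [hagree j (Finset.ne_of_mem_erase hj)]
    rw [heq]
    exact (Finset.mul_prod_erase Finset.univ (fun j => w' j (v j))
      (Finset.mem_univ j₀)).symm
  have hdiffsum : pExp w g - pExp w' g =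
      ∑ v : ι → Bool, ((w j₀ (v j₀) - w' j₀ (v j₀)) * Rest v) * g v := by
    unfold pExp
    rw [← Finset.sum_sub_distrib]
    apply Finset.sum_congr rfl
    intro v _
    rw [hdecomp v, hdecomp' v]
    ring
  rw [hdiffsum, pair_sum j₀]
  have hterm : ∀ v : ι → Bool, v j₀ = true →
      ((w j₀ (v j₀) - w' j₀ (v j₀)) * Rest v) * g v +
        ((w j₀ (Function.update v j₀ false j₀) - w' j₀ (Function.update v j₀ false j₀)) *
          Rest (Function.update v j₀ false)) * g (Function.update v j₀ false) =
      d * (Rest v * (g v - g (Function.update v j₀ false))) := by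
    intro v hv
    rw [Function.update_self, hRestUp, hv, hdf]
    ring
  have habs : |∑ v : ι → Bool, (if v j₀ = true then
      ((w j₀ (v j₀) - w' j₀ (v j₀)) * Rest v) * g v +
        ((w j₀ (Function.update v j₀ false j₀) - w' j₀ (Function.update v j₀ false j₀)) *
          Rest (Function.update v j₀ false)) * g (Function.update v j₀ false) else 0)|
      ≤ ∑ v : ι → Bool, (if v j₀ = true then |d| * (Rest v * bnd v) else 0) := by
    refine (Finset.abs_sum_le_sum_abs _ _).trans ?_
    apply Finset.sum_le_sum
    intro v _
    by_cases hv : v j₀ = true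
    · rw [if_pos hv, if_pos hv, hterm v hv, abs_mul, abs_mul]
      rw [abs_of_nonneg (hRest0 v)]
      apply mul_le_mul_of_nonneg_left _ (abs_nonneg d)
      exact mul_le_mul_of_nonneg_left (hg v hv) (hRest0 v)
    · rw [if_neg hv, if_neg hv, abs_zero]
  refine habs.trans (le_of_eq ?_)
  have hsum2 : ∑ v : ι → Bool, (if v j₀ = true then |d| * (Rest v * bnd v) else 0) =
      |d| * ∑ v : ι → Bool, (if v j₀ = true then Rest v * bnd v else 0) := by
    rw [Finset.mul_sum]
    apply Finset.sum_congr rfl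
    intro v _
    split_ifs <;> ring
  rw [hsum2]
  congr 1
  unfold pExp
  apply Finset.sum_congr rfl
  intro v _
  have hdec : (∏ j, wplus j₀ w j (v j)) = (if v j₀ = true then (1 : ℝ) else 0) * Rest v := by
    rw [← Finset.mul_prod_erase Finset.univ (fun j => wplus j₀ w j (v j))
      (Finset.mem_univ j₀)]
    have h1 : wplus j₀ w j₀ (v j₀) = (if v j₀ = true then (1 : ℝ) else 0) := by
      unfold wplus; rw [if_pos rfl]
    have h2 : ∏ j ∈ Finset.univ.erase j₀, wplus j₀ w j (v j) = Rest v := by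
      apply Finset.prod_congr rfl
      intro j hj
      unfold wplus
      rw [if_neg (Finset.ne_of_mem_erase hj)]
    rw [h1, h2]
  rw [hdec]
  split_ifs <;> ring

end Step
section Volume

lemma ratio_bound {F K F' K' κ : ℝ} (hκ1 : 1 ≤ κ) (hKκ : κ ≤ K) (hK'κ : κ ≤ K')
    (hF0 : 0 ≤ F) (hFK : F ≤ K) (hF'0 : 0 ≤ F') (hF'K' : F' ≤ K')
    (hFF' : |F - F'| ≤ 2) (hKK' : |K - K'| ≤ 1) :
    |F / K - F' / K'| ≤ 3 / κ := by
  have hκ0 : (0 : ℝ) < κ := lt_of_lt_of_le one_pos hκ1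
  have hK0 : (0 : ℝ) < K := lt_of_lt_of_le hκ0 hKκ
  have hK'0 : (0 : ℝ) < K' := lt_of_lt_of_le hκ0 hK'κ
  have key : |F * K' - F' * K| ≤ 3 * K' := by
    have h1 : F * K' - F' * K = (F - F') * K' + F' * (K' - K) := by ring
    rw [h1]
    calc |(F - F') * K' + F' * (K' - K)| ≤ |(F - F') * K'| + |F' * (K' - K)| := abs_add_le _ _
      _ = |F - F'| * K' + F' * |K' - K| := by
          rw [abs_mul, abs_mul, abs_of_pos hK'0, abs_of_nonneg hF'0]
      _ ≤ 2 * K' + K' * 1 := by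
          apply add_le_add
          · exact mul_le_mul_of_nonneg_right hFF' hK'0.le
          · rw [abs_sub_comm] at hKK'
            exact mul_le_mul hF'K' hKK' (abs_nonneg _) hK'0.le
      _ = 3 * K' := by ring
  have heq : F / K - F' / K' = (F * K' - F' * K) / (K * K') := by
    field_simp
  rw [heq, abs_div, abs_of_pos (mul_pos hK0 hK'0)]
  calc |F * K' - F' * K| / (K * K') ≤ (3 * K') / (K * K') :=
        div_le_div_of_nonneg_right key (mul_pos hK0 hK'0).le
    _ = 3 / K := by
        rw [mul_comm K K', mul_comm 3 K', mul_div_mul_left _ _ hK'0.ne']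
    _ ≤ 3 / κ := by
        apply div_le_div_of_nonneg_left (by norm_num) hκ0 hKκ

variable {G : Type*} [Group G] [DecidableEq G] (S Λfin : Finset G)

/-- the configuration on `G` determined by a finite configuration on `Λfin × S` -/
def extCfg (v : ({x // x ∈ Λfin} × {s // s ∈ S}) → Bool) : G → G → Bool :=
  fun x s => if h : x ∈ Λfin ∧ s ∈ S then v (⟨x, h.1⟩, ⟨s, h.2⟩) else false

/-- normalized cluster-size distribution of the finite configuration -/
noncomputable def gfun (m : ℝ) (v : ({x // x ∈ Λfin} × {s // s ∈ S}) → Bool) : ℝ :=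
  (Fdist S (extCfg S Λfin v) ↑Λfin m : ℝ) / (clusterCount S (extCfg S Λfin v) ↑Λfin : ℝ)

variable {S Λfin}

lemma gfun_mem_Icc (hne : Λfin.Nonempty) (m : ℝ)
    (v : ({x // x ∈ Λfin} × {s // s ∈ S}) → Bool) :
    0 ≤ gfun S Λfin m v ∧ gfun S Λfin m v ≤ 1 := by
  have hfin : (↑Λfin : Set G).Finite := Λfin.finite_toSet
  have hK : 1 ≤ clusterCount S (extCfg S Λfin v) ↑Λfin :=
    one_le_clusterCount hfin (by exact_mod_cast hne)
  have hF := Fdist_le_clusterCount (S := S) (ω := extCfg S Λfin v) hfin m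
  unfold gfun
  constructor
  · apply div_nonneg <;> positivity
  · rw [div_le_one (by exact_mod_cast hK)]
    exact_mod_cast hF

lemma abs_sub_le_one_of_Icc {a b : ℝ} (ha : 0 ≤ a ∧ a ≤ 1) (hb : 0 ≤ b ∧ b ≤ 1) :
    |a - b| ≤ 1 := by
  rw [abs_sub_le_iff]; constructor <;> linarith [ha.1, ha.2, hb.1, hb.2]

lemma gfun_step (hsym : ∀ s ∈ S, s⁻¹ ∈ S) (hne : Λfin.Nonempty) (m : ℝ)
    (j₀ : {x // x ∈ Λfin} × {s // s ∈ S}) (v : ({x // x ∈ Λfin} × {s // s ∈ S}) → Bool)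
    (hv : v j₀ = true) (κ : ℝ) (hκ1 : 1 ≤ κ)
    (hκ : κ ≤ 1 + zCnt Prod.fst (Finset.univ.erase j₀.1) v) :
    |gfun S Λfin m v - gfun S Λfin m (Function.update v j₀ false)| ≤ 3 / κ := by
  classical
  have hfin : (↑Λfin : Set G).Finite := Λfin.finite_toSet
  set ωv := extCfg S Λfin v with hωv
  set ωu := extCfg S Λfin (Function.update v j₀ false) with hωu
  -- the two configurations differ only at (j₀.1, j₀.2)
  have hdiff : ∀ x s : G, ¬(x = ↑j₀.1 ∧ s = ↑j₀.2) → ωu x s = ωv x s := by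
    intro x s hxs
    rw [hωu, hωv]
    unfold extCfg
    by_cases h : x ∈ Λfin ∧ s ∈ S
    · rw [dif_pos h, dif_pos h]
      have hne' : (⟨⟨x, h.1⟩, ⟨s, h.2⟩⟩ : {x // x ∈ Λfin} × {s // s ∈ S}) ≠ j₀ := by
        intro hEq
        apply hxs
        constructor
        · exact congrArg (fun t => (t.1 : G)) hEq
        · exact congrArg (fun t => (t.2 : G)) hEq
      rw [Function.update_of_ne hne']
    · rw [dif_neg h, dif_neg h]
  have h0 : ωu ↑j₀.1 ↑j₀.2 = false := by
    rw [hωu]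
    unfold extCfg
    rw [dif_pos ⟨j₀.1.2, j₀.2.2⟩]
    have : (⟨⟨↑j₀.1, j₀.1.2⟩, ⟨↑j₀.2, j₀.2.2⟩⟩ : {x // x ∈ Λfin} × {s // s ∈ S}) = j₀ := by
      apply Prod.ext <;> simp
    rw [this, Function.update_self]
  obtain ⟨⟨hK1, hK2⟩, hFm⟩ := counts_toggle (ω := ωu) (ω' := ωv) hsym hfin hdiff h0
  obtain ⟨hF1, hF2⟩ := hFm m
  -- the zero rows
  set Q : Finset {x // x ∈ Λfin} := (Finset.univ.erase j₀.1).filter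
    (fun y => ∀ j : {x // x ∈ Λfin} × {s // s ∈ S}, j.1 = y → v j = false) with hQ
  have hzQ : zCnt Prod.fst (Finset.univ.erase j₀.1) v = (Q.card : ℝ) := by
    unfold zCnt
    simp_rw [rowInd_eq_ite]
    rw [Finset.sum_boole]
  set Tset : Finset G := Q.image Subtype.val with hT
  have hTQ : Tset.card = Q.card := Finset.card_image_of_injective _ Subtype.val_injective
  have hTprop : ∀ y ∈ Tset, y ∈ (↑Λfin : Set G) ∧ y ≠ ↑j₀.1 ∧ ∀ s ∈ S, ωv y s = false := by
    intro y hy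
    rw [hT, Finset.mem_image] at hy
    obtain ⟨y', hy', rfl⟩ := hy
    rw [hQ, Finset.mem_filter, Finset.mem_erase] at hy'
    refine ⟨y'.2, fun hEq => hy'.1.1 (Subtype.ext hEq), ?_⟩
    intro s hs
    rw [hωv]
    unfold extCfg
    rw [dif_pos ⟨y'.2, hs⟩]
    exact hy'.2 (⟨y', ⟨s, hs⟩⟩ : _) rfl
  have hTpropu : ∀ y ∈ Tset, y ∈ (↑Λfin : Set G) ∧ y ≠ ↑j₀.1 ∧ ∀ s ∈ S, ωu y s = false := by
    intro y hy
    obtain ⟨h1, h2, h3⟩ := hTprop y hy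
    refine ⟨h1, h2, fun s hs => ?_⟩
    rw [hdiff y s (fun hc => h2 hc.1)]
    exact h3 s hs
  have hx₀mem : (↑j₀.1 : G) ∈ (↑Λfin : Set G) := j₀.1.2
  have hlow1 : Tset.card + 1 ≤ clusterCount S ωv ↑Λfin :=
    le_clusterCount hfin _ hx₀mem Tset hTprop
  have hlow2 : Tset.card + 1 ≤ clusterCount S ωu ↑Λfin :=
    le_clusterCount hfin _ hx₀mem Tset hTpropu
  -- apply the ratio bound
  have hκK : κ ≤ (clusterCount S ωv ↑Λfin : ℝ) := by
    calc κ ≤ 1 + zCnt Prod.fst (Finset.univ.erase j₀.1) v := hκ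
      _ = (Tset.card : ℝ) + 1 := by rw [hzQ, hTQ]; ring
      _ ≤ _ := by exact_mod_cast hlow1
  have hκK' : κ ≤ (clusterCount S ωu ↑Λfin : ℝ) := by
    calc κ ≤ 1 + zCnt Prod.fst (Finset.univ.erase j₀.1) v := hκ
      _ = (Tset.card : ℝ) + 1 := by rw [hzQ, hTQ]; ring
      _ ≤ _ := by exact_mod_cast hlow2
  have hFK : (Fdist S ωv ↑Λfin m : ℝ) ≤ (clusterCount S ωv ↑Λfin : ℝ) := by
    exact_mod_cast Fdist_le_clusterCount hfin m
  have hFK' : (Fdist S ωu ↑Λfin m : ℝ) ≤ (clusterCount S ωu ↑Λfin : ℝ) := by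
    exact_mod_cast Fdist_le_clusterCount hfin m
  unfold gfun
  rw [← hωv, ← hωu]
  apply ratio_bound hκ1 hκK hκK' (by positivity) hFK (by positivity) hFK'
  · rw [abs_sub_le_iff]
    constructor
    · have : (Fdist S ωv ↑Λfin m : ℝ) ≤ (Fdist S ωu ↑Λfin m : ℝ) + 1 := by exact_mod_cast hF1
      linarith
    · have : (Fdist S ωu ↑Λfin m : ℝ) ≤ (Fdist S ωv ↑Λfin m : ℝ) + 2 := by exact_mod_cast hF2
      linarith
  · rw [abs_sub_le_iff]
    constructor
    · have : (clusterCount S ωv ↑Λfin : ℝ) ≤ (clusterCount S ωu ↑Λfin : ℝ) := by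
        exact_mod_cast hK1
      linarith
    · have : (clusterCount S ωu ↑Λfin : ℝ) ≤ (clusterCount S ωv ↑Λfin : ℝ) + 1 := by
        exact_mod_cast hK2
      linarith

end Volume
section FV

variable {G : Type*} [Group G] [DecidableEq G] {S Λfin : Finset G}

lemma fv_estimate (hsym : ∀ s ∈ S, s⁻¹ ∈ S) (hne : Λfin.Nonempty)
    (p q : {s // s ∈ S} → ℝ)
    (hp : ∀ s, 0 ≤ p s ∧ p s < 1) (hq : ∀ s, 0 ≤ q s ∧ q s < 1)
    (hhalf : ∀ s, (1 - p s) / 2 ≤ 1 - q s) (m : ℝ) :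
    |pExp (fun (j : {x // x ∈ Λfin} × {s // s ∈ S}) (b : Bool) =>
        if b then p j.2 else 1 - p j.2) (gfun S Λfin m) -
      pExp (fun (j : {x // x ∈ Λfin} × {s // s ∈ S}) (b : Bool) =>
        if b then q j.2 else 1 - q j.2) (gfun S Λfin m)| ≤
      (∑ s : {s // s ∈ S}, |p s - q s|) * (20 / ∏ s : {s // s ∈ S}, ((1 - p s) / 2)) := by
  classical
  set g := gfun S Λfin m with hg
  set ρ : ℝ := ∏ s : {s // s ∈ S}, ((1 - p s) / 2) with hρ
  have hρpos : 0 < ρ := Finset.prod_pos fun s _ => by have := (hp s).2; linarith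
  have hρle1 : ρ ≤ 1 := by
    apply Finset.prod_le_one
    · intro s _; have := (hp s).2; linarith
    · intro s _; have := (hp s).1; linarith
  set N : ℕ := Λfin.card with hN
  have hN1 : 1 ≤ N := Finset.card_pos.2 hne
  set M : ℕ := Fintype.card ({x // x ∈ Λfin} × {s // s ∈ S}) with hM
  set e := Fintype.equivFin ({x // x ∈ Λfin} × {s // s ∈ S}) with he
  set wp : ({x // x ∈ Λfin} × {s // s ∈ S}) → Bool → ℝ :=
    fun j b => if b then p j.2 else 1 - p j.2 with hwp
  set wq : ({x // x ∈ Λfin} × {s // s ∈ S}) → Bool → ℝ :=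
    fun j b => if b then q j.2 else 1 - q j.2 with hwq
  set wmix : ℕ → ({x // x ∈ Λfin} × {s // s ∈ S}) → Bool → ℝ :=
    fun k j b => if (e j : ℕ) < k then wq j b else wp j b with hwmix
  have hwp0 : ∀ j b, 0 ≤ wp j b := by
    intro j b
    rw [hwp]; dsimp only
    split_ifs
    · exact (hp j.2).1
    · have := (hp j.2).2; linarith
  have hwq0 : ∀ j b, 0 ≤ wq j b := by
    intro j b
    rw [hwq]; dsimp only
    split_ifs
    · exact (hq j.2).1
    · have := (hq j.2).2; linarith
  have hwp1 : ∀ j, wp j true + wp j false = 1 := by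
    intro j; rw [hwp]; dsimp only; simp
  have hwq1 : ∀ j, wq j true + wq j false = 1 := by
    intro j; rw [hwq]; dsimp only; simp
  have hw0 : ∀ k j b, 0 ≤ wmix k j b := by
    intro k j b
    rw [hwmix]
    dsimp only
    split_ifs
    · exact hwq0 j b
    · exact hwp0 j b
  have hw1 : ∀ k j, wmix k j true + wmix k j false = 1 := by
    intro k j
    rw [hwmix]
    dsimp only
    split_ifs
    · exact hwq1 j
    · exact hwp1 j
  have hmix0 : wmix 0 = wp := by
    funext j b
    rw [hwmix]
    simp
  have hmixM : wmix M = wq := by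
    funext j b
    rw [hwmix]
    simp [(e j).isLt]
    intro h; exact absurd h (not_le.2 (e j).isLt)
  -- bounds on g
  have hgIcc := fun v => gfun_mem_Icc (S := S) hne m v
  -- the per-step bound
  set B : ℝ := if 2 ≤ N then 10 / (ρ * ((N : ℝ) - 1)) else 1 with hB
  set D : ℕ → ℝ := fun k' => if hk' : k' < M then
    |p (e.symm ⟨k', hk'⟩).2 - q (e.symm ⟨k', hk'⟩).2| else 0 with hD
  have hstepk : ∀ k, ∀ hkM : k < M,
      |pExp (wmix k) g - pExp (wmix (k + 1)) g| ≤ D k * B := by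
    intro k hkM
    have hDk : D k = |p (e.symm ⟨k, hkM⟩).2 - q (e.symm ⟨k, hkM⟩).2| := by
      rw [hD]; dsimp only; rw [dif_pos hkM]
    rw [hDk]
    set j₀ := e.symm ⟨k, hkM⟩ with hj₀
    have hej₀ : (e j₀ : ℕ) = k := by rw [hj₀, Equiv.apply_symm_apply]
    have hagree : ∀ j, j ≠ j₀ → wmix k j = wmix (k + 1) j := by
      intro j hj
      funext b
      rw [hwmix]
      dsimp only
      have hne' : (e j : ℕ) ≠ k := by
        intro hEq
        apply hj
        have : e j = e j₀ := by
          apply Fin.ext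
          rw [hEq, hej₀]
        exact e.injective this
      have : ((e j : ℕ) < k) ↔ ((e j : ℕ) < k + 1) := by omega
      rw [if_congr this rfl rfl]
    have hd : wmix k j₀ true - wmix (k + 1) j₀ true = p j₀.2 - q j₀.2 := by
      rw [hwmix]
      dsimp only
      rw [hej₀]
      simp only [lt_irrefl, if_false, Nat.lt_succ_self, if_true]
      simp [hwp, hwq]
    -- choose the bound function
    by_cases hN2 : 2 ≤ N
    · -- main case : at least two rows
      set τ : ℝ := ρ * ((N : ℝ) - 1) / 2 with hτ
      have hτpos : 0 < τ := by
        rw [hτ]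
        have : (2 : ℝ) ≤ (N : ℝ) := by exact_mod_cast hN2
        have : (1 : ℝ) ≤ (N : ℝ) - 1 := by linarith
        positivity
      set mb : ℝ := min 1 (3 / (1 + τ)) with hmb
      have hmb0 : 0 ≤ mb := le_min (by norm_num) (by positivity)
      set bnd : (({x // x ∈ Λfin} × {s // s ∈ S}) → Bool) → ℝ :=
        fun v => if zCnt Prod.fst (Finset.univ.erase j₀.1) v < τ then 1 else mb with hbnd
      have hgstep : ∀ v, v j₀ = true → |g v - g (Function.update v j₀ false)| ≤ bnd v := by
        intro v hv
        rw [hbnd]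
        dsimp only
        split_ifs with hz
        · exact abs_sub_le_one_of_Icc (hgIcc v) (hgIcc _)
        · push_neg at hz
          apply le_min
          · exact abs_sub_le_one_of_Icc (hgIcc v) (hgIcc _)
          · have h3 := gfun_step hsym hne m j₀ v hv (1 + zCnt Prod.fst (Finset.univ.erase j₀.1) v)
              (by have := zCnt_nonneg Prod.fst (Finset.univ.erase j₀.1) v; linarith) le_rfl
            refine h3.trans ?_
            apply div_le_div_of_nonneg_left (by norm_num) (by linarith) (by linarith)
      have hmain := pExp_step j₀ (wmix k) (wmix (k + 1)) hagree (hw0 k) (hw1 k) (hw1 (k + 1))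
        g bnd hgstep
      rw [hd] at hmain
      refine hmain.trans ?_
      apply mul_le_mul_of_nonneg_left _ (abs_nonneg _)
      -- expectation of the bound function
      set w' := wplus j₀ (wmix k) with hw'
      have hw'0 : ∀ j b, 0 ≤ w' j b := wplus_nonneg (hw0 k)
      have hw'1 : ∀ j, w' j true + w' j false = 1 := wplus_sum_one (hw1 k)
      set A : Finset {x // x ∈ Λfin} := Finset.univ.erase j₀.1 with hA
      set μ : ℝ := ∑ y ∈ A, ∏ j ∈ Finset.univ.filter
        (fun j : {x // x ∈ Λfin} × {s // s ∈ S} => j.1 = y), w' j false with hμ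
      have hπρ : ∀ y ∈ A, ρ ≤ ∏ j ∈ Finset.univ.filter
          (fun j : {x // x ∈ Λfin} × {s // s ∈ S} => j.1 = y), w' j false := by
        intro y hyA
        have hyne : y ≠ j₀.1 := Finset.ne_of_mem_erase hyA
        have hrow : Finset.univ.filter
            (fun j : {x // x ∈ Λfin} × {s // s ∈ S} => j.1 = y) =
            ({y} : Finset {x // x ∈ Λfin}) ×ˢ Finset.univ := by
          ext j
          simp only [Finset.mem_filter, Finset.mem_univ, true_and, Finset.mem_product,
            Finset.mem_singleton]
          constructor
          · intro h; exact ⟨h, trivial⟩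
          · intro h; exact h.1
        rw [hrow, Finset.prod_product, Finset.prod_singleton]
        have hterm : ∀ s : {s // s ∈ S}, ((1 - p s) / 2) ≤ w' (y, s) false := by
          intro s
          have hjne : ((y, s) : {x // x ∈ Λfin} × {s // s ∈ S}) ≠ j₀ := by
            intro hEq
            exact hyne (congrArg Prod.fst hEq)
          rw [hw']
          unfold wplus
          rw [if_neg hjne]
          rw [hwmix]
          dsimp only
          split_ifs
          · exact hhalf s
          · have := (hp s).2; simp [hwp]; linarith
        calc ρ = ∏ s : {s // s ∈ S}, ((1 - p s) / 2) := hρ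
          _ ≤ ∏ s : {s // s ∈ S}, w' (y, s) false := by
              apply Finset.prod_le_prod
              · intro s _; have := (hp s).2; linarith
              · intro s _; exact hterm s
      have hcardA : (A.card : ℝ) = (N : ℝ) - 1 := by
        rw [hA, Finset.card_erase_of_mem (Finset.mem_univ _), Finset.card_univ,
          Fintype.card_coe]
        have : 1 ≤ Λfin.card := hN1
        push_cast [Nat.cast_sub this]
        ring
      have hμlow : ρ * ((N : ℝ) - 1) ≤ μ := by
        have hsum := Finset.card_nsmul_le_sum A
          (fun y => ∏ j ∈ Finset.univ.filter
            (fun j : {x // x ∈ Λfin} × {s // s ∈ S} => j.1 = y), w' j false) ρ hπρ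
        rw [nsmul_eq_mul] at hsum
        rw [hμ]
        calc ρ * ((N : ℝ) - 1) = (A.card : ℝ) * ρ := by rw [hcardA]; ring
          _ ≤ _ := hsum
      have hμpos : 0 < μ := by
        have h2 : (2 : ℝ) ≤ (N : ℝ) := by exact_mod_cast hN2
        have : 0 < ρ * ((N : ℝ) - 1) := by
          apply mul_pos hρpos; linarith
        linarith
      have hτμ : τ ≤ μ / 2 := by rw [hτ]; linarith
      have hcheb := pExp_cheb (w := w') hw'0 hw'1 Prod.fst A μ hμ hμpos τ hτμ
      have hbndle : ∀ v, bnd v ≤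
          (if zCnt Prod.fst A v < τ then (1 : ℝ) else 0) + mb := by
        intro v
        rw [hbnd]
        dsimp only
        split_ifs
        · linarith
        · linarith [le_refl mb]
      calc pExp w' bnd
          ≤ pExp w' (fun v => (if zCnt Prod.fst A v < τ then (1 : ℝ) else 0) + mb) :=
            pExp_mono hw'0 hbndle
        _ = pExp w' (fun v => if zCnt Prod.fst A v < τ then (1 : ℝ) else 0) +
            pExp w' (fun _ => mb) := pExp_add
        _ ≤ 4 / μ + mb := by
            apply add_le_add hcheb
            have : pExp w' (fun _ : ({x // x ∈ Λfin} × {s // s ∈ S}) → Bool => mb) =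
                mb * pExp w' (fun _ => 1) := by
              rw [← pExp_const_mul]
              congr 1
              funext v
              ring
            rw [this, pExp_one hw'1, mul_one]
        _ ≤ B := by
            rw [hB, if_pos hN2]
            have h2 : (2 : ℝ) ≤ (N : ℝ) := by exact_mod_cast hN2
            have hN1' : (0 : ℝ) < (N : ℝ) - 1 := by linarith
            have hden : 0 < ρ * ((N : ℝ) - 1) := mul_pos hρpos hN1'
            have hb1 : 4 / μ ≤ 4 / (ρ * ((N : ℝ) - 1)) :=
              div_le_div_of_nonneg_left (by norm_num) hden hμlow
            have hb2 : mb ≤ 6 / (ρ * ((N : ℝ) - 1)) := by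
              have : mb ≤ 3 / (1 + τ) := min_le_right _ _
              refine this.trans ?_
              have h3ττ : 3 / (1 + τ) ≤ 3 / τ :=
                div_le_div_of_nonneg_left (by norm_num) hτpos (by linarith)
              refine h3ττ.trans (le_of_eq ?_)
              rw [hτ]
              field_simp
              norm_num
            calc 4 / μ + mb ≤ 4 / (ρ * ((N : ℝ) - 1)) + 6 / (ρ * ((N : ℝ) - 1)) :=
                  add_le_add hb1 hb2
              _ = 10 / (ρ * ((N : ℝ) - 1)) := by rw [← add_div]; norm_num
    · -- small case : a single row
      set bnd : (({x // x ∈ Λfin} × {s // s ∈ S}) → Bool) → ℝ := fun _ => 1 with hbnd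
      have hgstep : ∀ v, v j₀ = true → |g v - g (Function.update v j₀ false)| ≤ bnd v :=
        fun v _ => abs_sub_le_one_of_Icc (hgIcc v) (hgIcc _)
      have hmain := pExp_step j₀ (wmix k) (wmix (k + 1)) hagree (hw0 k) (hw1 k) (hw1 (k + 1))
        g bnd hgstep
      rw [hd] at hmain
      refine hmain.trans ?_
      apply mul_le_mul_of_nonneg_left _ (abs_nonneg _)
      rw [hB, if_neg hN2]
      exact le_of_eq (pExp_one (wplus_sum_one (hw1 k)))
  -- telescoping
  have htel : |pExp wp g - pExp wq g| ≤
      ∑ k ∈ Finset.range M, |pExp (wmix k) g - pExp (wmix (k + 1)) g| := by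
    have hsum := Finset.sum_range_sub' (fun k => pExp (wmix k) g) M
    calc |pExp wp g - pExp wq g|
        = |∑ k ∈ Finset.range M, (pExp (wmix k) g - pExp (wmix (k + 1)) g)| := by
          rw [hsum, hmix0, hmixM]
      _ ≤ _ := Finset.abs_sum_le_sum_abs _ _
  have hBnn : 0 ≤ B := by
    rw [hB]
    split_ifs with h2
    · have h2' : (2 : ℝ) ≤ (N : ℝ) := by exact_mod_cast h2
      have : (0 : ℝ) < ρ * ((N : ℝ) - 1) := mul_pos hρpos (by linarith)
      positivity
    · norm_num
  -- sum of the coordinate-differences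
  have hsumd : ∑ k ∈ Finset.range M, D k = (N : ℝ) * ∑ s : {s // s ∈ S}, |p s - q s| := by
    rw [← Fin.sum_univ_eq_sum_range]
    have hterm : ∀ i : Fin M, D (i : ℕ) = |p (e.symm i).2 - q (e.symm i).2| := by
      intro i
      rw [hD]; dsimp only; rw [dif_pos i.isLt]
    rw [Finset.sum_congr rfl fun i _ => hterm i]
    rw [Equiv.sum_comp e.symm (fun j => |p j.2 - q j.2|)]
    rw [Fintype.sum_prod_type]
    simp only [Finset.sum_const, Finset.card_univ, Fintype.card_coe, nsmul_eq_mul]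
    rfl
  have hsnn : (0 : ℝ) ≤ ∑ s : {s // s ∈ S}, |p s - q s| :=
    Finset.sum_nonneg fun s _ => abs_nonneg _
  have hNB : (N : ℝ) * B ≤ 20 / ρ := by
    by_cases hN2 : 2 ≤ N
    · rw [hB, if_pos hN2]
      have h2' : (2 : ℝ) ≤ (N : ℝ) := by exact_mod_cast hN2
      have hden : (0 : ℝ) < ρ * ((N : ℝ) - 1) := mul_pos hρpos (by linarith)
      rw [mul_div_assoc']
      rw [div_le_div_iff₀ hden hρpos]
      nlinarith [mul_nonneg hρpos.le (by linarith : (0 : ℝ) ≤ (N : ℝ) - 2)]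
    · rw [hB, if_neg hN2]
      have hNeq : N = 1 := by omega
      rw [hNeq]
      rw [mul_one, Nat.cast_one, le_div_iff₀ hρpos]
      linarith
  calc |pExp wp g - pExp wq g|
      ≤ ∑ k ∈ Finset.range M, |pExp (wmix k) g - pExp (wmix (k + 1)) g| := htel
    _ ≤ ∑ k ∈ Finset.range M, D k * B := by
        apply Finset.sum_le_sum
        intro k hk
        exact hstepk k (Finset.mem_range.1 hk)
    _ = ((N : ℝ) * ∑ s : {s // s ∈ S}, |p s - q s|) * B := by
        rw [← Finset.sum_mul, hsumd]
    _ = (∑ s : {s // s ∈ S}, |p s - q s|) * ((N : ℝ) * B) := by ring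
    _ ≤ (∑ s : {s // s ∈ S}, |p s - q s|) * (20 / ρ) :=
        mul_le_mul_of_nonneg_left hNB hsnn

end FV
section Bridge

variable {G : Type*} [Group G] {S : Finset G} {Λ : Set G} {ω ω' : G → G → Bool}

lemma percStep_congr (hsym : ∀ s ∈ S, s⁻¹ ∈ S)
    (h : ∀ x ∈ Λ, ∀ s ∈ S, ω x s = ω' x s) :
    percStep S ω Λ = percStep S ω' Λ := by
  funext a c
  apply propext
  constructor
  · rintro ⟨ha, hc, hS, h1, h2⟩
    have hS' : a * c⁻¹ ∈ S := by simpa [mul_inv_rev] using hsym _ hS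
    exact ⟨ha, hc, hS, by rw [← h a ha _ hS]; exact h1, by rw [← h c hc _ hS']; exact h2⟩
  · rintro ⟨ha, hc, hS, h1, h2⟩
    have hS' : a * c⁻¹ ∈ S := by simpa [mul_inv_rev] using hsym _ hS
    exact ⟨ha, hc, hS, by rw [h a ha _ hS]; exact h1, by rw [h c hc _ hS']; exact h2⟩

lemma percCluster_congr (hsym : ∀ s ∈ S, s⁻¹ ∈ S)
    (h : ∀ x ∈ Λ, ∀ s ∈ S, ω x s = ω' x s) :
    percCluster S ω Λ = percCluster S ω' Λ := by
  have hR := percStep_congr hsym h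
  funext x
  unfold percCluster
  rw [hR]

lemma clusterCount_congr (hsym : ∀ s ∈ S, s⁻¹ ∈ S)
    (h : ∀ x ∈ Λ, ∀ s ∈ S, ω x s = ω' x s) :
    clusterCount S ω Λ = clusterCount S ω' Λ := by
  unfold clusterCount
  rw [percCluster_congr hsym h]

lemma Fdist_congr (hsym : ∀ s ∈ S, s⁻¹ ∈ S)
    (h : ∀ x ∈ Λ, ∀ s ∈ S, ω x s = ω' x s) (m : ℝ) :
    Fdist S ω Λ m = Fdist S ω' Λ m := by
  unfold Fdist
  rw [percCluster_congr hsym h]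

end Bridge

section Integral

variable {G : Type*} [Group G] [DecidableEq G] {S Λfin : Finset G}

/-- restriction of a configuration to the finite window -/
def resCfg (S Λfin : Finset G) (ω : G → G → Bool) :
    ({x // x ∈ Λfin} × {s // s ∈ S}) → Bool :=
  fun j => ω ↑j.1 ↑j.2

lemma resCfg_measurable : Measurable (resCfg S Λfin) := by
  apply measurable_pi_lambda
  intro j
  exact (measurable_pi_apply (↑j.2 : G)).comp (measurable_pi_apply (↑j.1 : G))

lemma f_eq_gfun_res (hsym : ∀ s ∈ S, s⁻¹ ∈ S) (m : ℝ) (ω : G → G → Bool) :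
    (Fdist S ω ↑Λfin m : ℝ) / (clusterCount S ω ↑Λfin : ℝ) =
      gfun S Λfin m (resCfg S Λfin ω) := by
  have h : ∀ x ∈ (↑Λfin : Set G), ∀ s ∈ S, ω x s = extCfg S Λfin (resCfg S Λfin ω) x s := by
    intro x hx s hs
    unfold extCfg
    rw [dif_pos ⟨hx, hs⟩]
    rfl
  unfold gfun
  rw [Fdist_congr hsym h, clusterCount_congr hsym h]

lemma integral_eq_pExp (P : Measure (G → G → Bool)) [IsProbabilityMeasure P]
    (par : {s // s ∈ S} → ℝ) (hpar : ∀ s, 0 ≤ par s ∧ par s < 1)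
    (hcylP : ∀ (E : Finset (G × {x // x ∈ S})) (a : G × {x // x ∈ S} → Bool),
      P {ω | ∀ q ∈ E, ω q.1 ↑q.2 = a q} =
        ∏ q ∈ E, ENNReal.ofReal (if a q then par q.2 else 1 - par q.2)) (m : ℝ) :
    ∫ ω, gfun S Λfin m (resCfg S Λfin ω) ∂P =
      pExp (fun (j : {x // x ∈ Λfin} × {s // s ∈ S}) b => if b then par j.2 else 1 - par j.2)
        (gfun S Λfin m) := by
  classical
  set res := resCfg S Λfin with hres
  set gv := gfun S Λfin m with hgv
  set A : (({x // x ∈ Λfin} × {s // s ∈ S}) → Bool) → Set (G → G → Bool) :=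
    fun v => res ⁻¹' {v} with hA
  have hAmeas : ∀ v, MeasurableSet (A v) :=
    fun v => resCfg_measurable (measurableSet_singleton v)
  -- pointwise representation as a finite sum of indicators
  have hrep : ∀ ω, gv (res ω) =
      ∑ v : ({x // x ∈ Λfin} × {s // s ∈ S}) → Bool, (A v).indicator (fun _ => gv v) ω := by
    intro ω
    have h1 : ∀ v, (A v).indicator (fun _ => gv v) ω = if res ω = v then gv v else 0 := by
      intro v
      rw [Set.indicator_apply]
      congr 1
    simp_rw [h1]
    rw [Finset.sum_ite_eq Finset.univ (res ω) gv]
    simp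
  -- the measure of each cylinder
  have hmeasA : ∀ v, (P (A v)).toReal =
      ∏ x : {x // x ∈ Λfin}, ∏ s : {s // s ∈ S},
        (if v (x, s) then par s else 1 - par s) := by
    intro v
    have hset : A v = {ω | ∀ q ∈ Λfin ×ˢ (Finset.univ : Finset {s // s ∈ S}),
        ω q.1 ↑q.2 = (fun q : G × {s // s ∈ S} =>
          if h : q.1 ∈ Λfin then v (⟨q.1, h⟩, q.2) else false) q} := by
      ext ω
      simp only [hA, Set.mem_preimage, Set.mem_singleton_iff, Set.mem_setOf_eq]
      constructor
      · intro hEq q hq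
        rw [Finset.mem_product] at hq
        rw [dif_pos hq.1]
        rw [← hEq]
        rfl
      · intro hq
        funext j
        have hmem : (↑j.1, j.2) ∈ Λfin ×ˢ (Finset.univ : Finset {s // s ∈ S}) := by
          rw [Finset.mem_product]
          exact ⟨j.1.2, Finset.mem_univ _⟩
        have := hq (↑j.1, j.2) hmem
        rw [dif_pos j.1.2] at this
        exact this
    rw [hset, hcylP]
    have hnn : ∀ q ∈ Λfin ×ˢ (Finset.univ : Finset {s // s ∈ S}),
        0 ≤ (if (if h : q.1 ∈ Λfin then v (⟨q.1, h⟩, q.2) else false) then par q.2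
          else 1 - par q.2) := by
      intro q _
      split_ifs
      all_goals first
        | exact (hpar q.2).1
        | (have := (hpar q.2).2; linarith)
    rw [← ENNReal.ofReal_prod_of_nonneg hnn, ENNReal.toReal_ofReal
      (Finset.prod_nonneg hnn)]
    rw [Finset.prod_product]
    rw [← Finset.prod_coe_sort Λfin]
    apply Finset.prod_congr rfl
    intro x _
    apply Finset.prod_congr rfl
    intro s _
    rw [dif_pos x.2]
  -- compute the integral
  have hint : ∫ ω, gv (res ω) ∂P =
      ∑ v : ({x // x ∈ Λfin} × {s // s ∈ S}) → Bool, gv v * (P (A v)).toReal := by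
    rw [MeasureTheory.integral_congr_ae (Filter.EventuallyEq.of_eq (funext hrep))]
    rw [MeasureTheory.integral_finset_sum]
    · apply Finset.sum_congr rfl
      intro v _
      rw [MeasureTheory.integral_indicator_const _ (hAmeas v)]
      rw [smul_eq_mul, mul_comm]
      rfl
    · intro v _
      exact (MeasureTheory.integrable_const _).indicator (hAmeas v)
  rw [hint]
  unfold pExp
  apply Finset.sum_congr rfl
  intro v _
  rw [hmeasA v, mul_comm]
  congr 1
  rw [Fintype.prod_prod_type]

end Integral
section Main

lemma gfun_res_measurable {G : Type*} [Group G] [DecidableEq G] {S Λfin : Finset G} (m : ℝ) :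
    Measurable (fun ω : G → G → Bool => gfun S Λfin m (resCfg S Λfin ω)) :=
  Measurable.comp' (measurable_of_countable (gfun S Λfin m)) resCfg_measurable

end Main

/-- Theorem 8.10: continuity of `p ↦ Φ_p` on `[0,1)^S`, where `[0,1)^S` carries the
ℓ²-metric and the distribution functions `Φ_p` are compared in supremum norm. -/
theorem stmt_19 {G : Type*} [Group G] (S : Finset G)
    (hsym : ∀ s ∈ S, s⁻¹ ∈ S) (hgen : Subgroup.closure (S : Set G) = ⊤)
    (Λ : ℕ → Set G) (hfin : ∀ n, (Λ n).Finite) (hne : ∀ n, (Λ n).Nonempty)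
    -- (Λ_n) is a Følner sequence:
    (hfol : ∀ K : Set G, K.Finite → K.Nonempty →
      Tendsto (fun n => ((symmDiff (Λ n) (K * Λ n)).ncard : ℝ) / ((Λ n).ncard : ℝ))
        atTop (nhds 0))
    -- (Λ_n) is tempered:
    (htemp : ∃ c : ℝ, 0 < c ∧ ∀ n : ℕ,
      ((⋃ k ∈ Finset.range n, (Λ k)⁻¹ * Λ n).ncard : ℝ) ≤ c * ((Λ n).ncard : ℝ))
    (P : EuclideanSpace ℝ {x // x ∈ S} → Measure (G → G → Bool))
    (hprob : ∀ ppar : EuclideanSpace ℝ {x // x ∈ S}, (∀ s, 0 ≤ ppar s ∧ ppar s < 1) →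
      IsProbabilityMeasure (P ppar))
    -- P p is the product Bernoulli measure with parameters p:
    (hcyl : ∀ ppar : EuclideanSpace ℝ {x // x ∈ S}, (∀ s, 0 ≤ ppar s ∧ ppar s < 1) →
      ∀ (E : Finset (G × {x // x ∈ S})) (a : G × {x // x ∈ S} → Bool),
        P ppar {ω | ∀ q ∈ E, ω q.1 ↑q.2 = a q} =
          ∏ q ∈ E, ENNReal.ofReal (if a q then ppar q.2 else 1 - ppar q.2))
    (Φ : EuclideanSpace ℝ {x // x ∈ S} → ℝ → ℝ)
    -- each Φ_p is a bounded (right-continuous) function: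
    (hbdd : ∀ ppar, (∀ s, 0 ≤ ppar s ∧ ppar s < 1) → ∃ Cb : ℝ, ∀ m : ℝ, |Φ ppar m| ≤ Cb)
    (hrc : ∀ ppar, (∀ s, 0 ≤ ppar s ∧ ppar s < 1) →
      ∀ m : ℝ, ContinuousWithinAt (Φ ppar) (Set.Ici m) m)
    -- Φ_p is the ℙ_p-almost sure uniform limit of F_ω(Λ_n)/K_ω(Λ_n):
    (hlim : ∀ ppar, (∀ s, 0 ≤ ppar s ∧ ppar s < 1) →
      ∀ᵐ ω ∂(P ppar),
        TendstoUniformly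
          (fun n m => (Fdist S ω (Λ n) m : ℝ) / (clusterCount S ω (Λ n) : ℝ))
          (Φ ppar) atTop) :
    -- Ψ : p ↦ Φ_p is continuous on [0,1)^S w.r.t. the supremum norm on ℬ(ℝ):
    ∀ ppar, (∀ s, 0 ≤ ppar s ∧ ppar s < 1) → ∀ ε : ℝ, 0 < ε →
      ∃ δ : ℝ, 0 < δ ∧ ∀ qpar, (∀ s, 0 ≤ qpar s ∧ qpar s < 1) →
        dist qpar ppar < δ → ∀ m : ℝ, |Φ qpar m - Φ ppar m| ≤ ε := by
  classical
  intro ppar hppar ε hε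
  set ρ : ℝ := ∏ s : {x // x ∈ S}, ((1 - ppar s) / 2) with hρ
  have hρpos : 0 < ρ := Finset.prod_pos fun s _ => by have := (hppar s).2; linarith
  have hρle : ∀ s₀ : {x // x ∈ S}, ρ ≤ (1 - ppar s₀) / 2 := by
    intro s₀
    rw [hρ, ← Finset.mul_prod_erase Finset.univ _ (Finset.mem_univ s₀)]
    have h1 : ∏ s ∈ Finset.univ.erase s₀, ((1 - ppar s) / 2) ≤ 1 := by
      apply Finset.prod_le_one
      · intro s _; have := (hppar s).2; linarith
      · intro s _; have := (hppar s).1; linarith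
    have h0 : 0 ≤ (1 - ppar s₀) / 2 := by have := (hppar s₀).1; have := (hppar s₀).2; linarith
    calc (1 - ppar s₀) / 2 * ∏ s ∈ Finset.univ.erase s₀, ((1 - ppar s) / 2)
        ≤ (1 - ppar s₀) / 2 * 1 := mul_le_mul_of_nonneg_left h1 h0
      _ = (1 - ppar s₀) / 2 := mul_one _
  set C : ℝ := (S.card : ℝ) * (20 / ρ) + 1 with hC
  have hCpos : 0 < C := by positivity
  refine ⟨min (ε / C) ρ, lt_min (by positivity) hρpos, ?_⟩
  intro qpar hqpar hdist m
  have hcoord : ∀ s : {x // x ∈ S}, |qpar s - ppar s| ≤ dist qpar ppar := by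
    intro s
    rw [EuclideanSpace.dist_eq]
    rw [← Real.sqrt_sq_eq_abs]
    apply Real.sqrt_le_sqrt
    have h2 : (qpar s - ppar s) ^ 2 = dist (qpar s) (ppar s) ^ 2 := by
      rw [Real.dist_eq, sq_abs]
    rw [h2]
    exact Finset.single_le_sum
      (f := fun i : {x // x ∈ S} => dist (qpar i) (ppar i) ^ 2)
      (fun i _ => sq_nonneg _) (Finset.mem_univ s)
  have hhalf : ∀ s : {x // x ∈ S}, (1 - ppar s) / 2 ≤ 1 - qpar s := by
    intro s
    have h1 := hcoord s
    have h2 : dist qpar ppar < ρ := lt_of_lt_of_le hdist (min_le_right _ _)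
    have h3 := hρle s
    have h4 : |qpar s - ppar s| < (1 - ppar s) / 2 := by linarith
    have h5 := (abs_lt.1 h4).1
    have h6 := (abs_lt.1 h4).2
    linarith
  haveI hPp : IsProbabilityMeasure (P ppar) := hprob ppar hppar
  haveI hPq : IsProbabilityMeasure (P qpar) := hprob qpar hqpar
  set Λf : ℕ → Finset G := fun n => (hfin n).toFinset with hΛf
  have hΛfc : ∀ n, (↑(Λf n) : Set G) = Λ n := fun n => (hfin n).coe_toFinset
  have hΛfne : ∀ n, (Λf n).Nonempty := by
    intro n
    rw [← Finset.coe_nonempty, hΛfc n]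
    exact hne n
  have hfeq : ∀ n (ω : G → G → Bool),
      (Fdist S ω (Λ n) m : ℝ) / (clusterCount S ω (Λ n) : ℝ) =
        gfun S (Λf n) m (resCfg S (Λf n) ω) := by
    intro n ω
    conv_lhs => rw [← hΛfc n]
    exact f_eq_gfun_res hsym m ω
  have hDCT : ∀ rpar : EuclideanSpace ℝ {x // x ∈ S}, ∀ hrpar : (∀ s, 0 ≤ rpar s ∧ rpar s < 1),
      Tendsto (fun n => ∫ ω, gfun S (Λf n) m (resCfg S (Λf n) ω) ∂(P rpar))
        atTop (nhds (Φ rpar m)) := by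
    intro rpar hrpar
    haveI := hprob rpar hrpar
    have h := MeasureTheory.tendsto_integral_of_dominated_convergence
      (μ := P rpar) (F := fun n ω => gfun S (Λf n) m (resCfg S (Λf n) ω))
      (f := fun _ => Φ rpar m) (fun _ => (1 : ℝ))
      (fun n => (gfun_res_measurable m).aestronglyMeasurable)
      (MeasureTheory.integrable_const 1)
      (fun n => Filter.Eventually.of_forall fun ω => by
        have h := gfun_mem_Icc (S := S) (hΛfne n) m (resCfg S (Λf n) ω)
        show ‖gfun S (Λf n) m (resCfg S (Λf n) ω)‖ ≤ 1
        rw [Real.norm_eq_abs, abs_le]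
        exact ⟨by linarith [h.1], h.2⟩)
      ?_
    · have hconst : ∫ _ω, Φ rpar m ∂(P rpar) = Φ rpar m := by
        rw [MeasureTheory.integral_const]
        simp
      rwa [hconst] at h
    · filter_upwards [hlim rpar hrpar] with ω hω
      have ht := hω.tendsto_at m
      have heq : (fun n => gfun S (Λf n) m (resCfg S (Λf n) ω)) =
          fun n => (Fdist S ω (Λ n) m : ℝ) / (clusterCount S ω (Λ n) : ℝ) :=
        funext fun n => (hfeq n ω).symm
      rw [heq]
      exact ht
  have hIp := hDCT ppar hppar
  have hIq := hDCT qpar hqpar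
  have htends : Tendsto (fun n =>
      |(∫ ω, gfun S (Λf n) m (resCfg S (Λf n) ω) ∂(P qpar)) -
        (∫ ω, gfun S (Λf n) m (resCfg S (Λf n) ω) ∂(P ppar))|)
      atTop (nhds |Φ qpar m - Φ ppar m|) := (hIq.sub hIp).abs
  apply le_of_tendsto htends
  apply Filter.Eventually.of_forall
  intro n
  rw [integral_eq_pExp (P qpar) qpar hqpar (hcyl qpar hqpar) m,
    integral_eq_pExp (P ppar) ppar hppar (hcyl ppar hppar) m]
  have hfv := fv_estimate (Λfin := Λf n) hsym (hΛfne n) ppar qpar hppar hqpar hhalf m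
  calc |pExp (fun (j : {x // x ∈ Λf n} × {s // s ∈ S}) b =>
          if b then qpar j.2 else 1 - qpar j.2) (gfun S (Λf n) m) -
        pExp (fun (j : {x // x ∈ Λf n} × {s // s ∈ S}) b =>
          if b then ppar j.2 else 1 - ppar j.2) (gfun S (Λf n) m)|
      = |pExp (fun (j : {x // x ∈ Λf n} × {s // s ∈ S}) b =>
          if b then ppar j.2 else 1 - ppar j.2) (gfun S (Λf n) m) -
        pExp (fun (j : {x // x ∈ Λf n} × {s // s ∈ S}) b =>
          if b then qpar j.2 else 1 - qpar j.2) (gfun S (Λf n) m)| := abs_sub_comm _ _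
    _ ≤ (∑ s : {s // s ∈ S}, |ppar s - qpar s|) * (20 / ρ) := hfv
    _ ≤ ((S.card : ℝ) * dist qpar ppar) * (20 / ρ) := by
        apply mul_le_mul_of_nonneg_right _ (by positivity)
        have hle : ∀ s : {s // s ∈ S}, |ppar s - qpar s| ≤ dist qpar ppar := by
          intro s
          rw [abs_sub_comm]
          exact hcoord s
        calc ∑ s : {s // s ∈ S}, |ppar s - qpar s|
            ≤ Finset.univ.card • dist qpar ppar :=
              Finset.sum_le_card_nsmul _ _ _ fun s _ => hle s
          _ = (S.card : ℝ) * dist qpar ppar := by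
              rw [Finset.card_univ, Fintype.card_coe, nsmul_eq_mul]
    _ ≤ ε := by
        have h1 : dist qpar ppar ≤ ε / C := le_of_lt (lt_of_lt_of_le hdist (min_le_left _ _))
        have h2 : (S.card : ℝ) * (20 / ρ) ≤ C := by rw [hC]; linarith
        have h3 : (0 : ℝ) ≤ dist qpar ppar := dist_nonneg
        have h4 : (0 : ℝ) ≤ (S.card : ℝ) * (20 / ρ) := by positivity
        calc ((S.card : ℝ) * dist qpar ppar) * (20 / ρ)
            = ((S.card : ℝ) * (20 / ρ)) * dist qpar ppar := by ring
          _ ≤ C * (ε / C) := mul_le_mul h2 h1 h3 hCpos.le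
          _ = ε := by field_simp
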